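/- Let G be a finite group, p a prime, and P ≤ G an abelian radical p-subgroup. Then O_p(Z(C_G(P))) = P. -/

import Mathlib

/-- The subgroup of `G` generated by all subgroups of `N` that are `p`-groups and
are normalized by `N`, i.e. `O_p(N)`, the largest normal `p`-subgroup of `N`. -/
def relPCore (p : ℕ) {G : Type*} [Group G] (N : Subgroup G) : Subgroup G :=
  sSup {Q : Subgroup G | Q ≤ N ∧ IsPGroup p Q ∧ ∀ n ∈ N, ∀ x ∈ Q, n * x * n⁻¹ ∈ Q}

section aux

variable {G : Type*} [Group G]

/-- If `n` normalizes a subgroup `H` then it normalizes its centralizer. -/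
lemma conj_mem_centralizer_of_normalizes {H : Subgroup G} {n : G}
    (hn : n ∈ (Subgroup.normalizer (H : Set G))) {w : G} (hw : w ∈ Subgroup.centralizer (H : Set G)) :
    n * w * n⁻¹ ∈ Subgroup.centralizer (H : Set G) := by
  rw [Subgroup.mem_centralizer_iff] at hw ⊢
  intro c hc
  have hc' : n⁻¹ * c * n ∈ H := (Subgroup.mem_normalizer_iff''.mp hn c).mp hc
  have key := hw _ hc'
  calc c * (n * w * n⁻¹) = n * ((n⁻¹ * c * n) * w) * n⁻¹ := by group
    _ = n * (w * (n⁻¹ * c * n)) * n⁻¹ := by rw [key]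
    _ = (n * w * n⁻¹) * c := by group

lemma centralizer_le_normalizer' (P : Subgroup G) :
    Subgroup.centralizer (P : Set G) ≤ (Subgroup.normalizer (P : Set G)) := by
  intro c hc
  rw [Subgroup.mem_centralizer_iff] at hc
  rw [Subgroup.mem_normalizer_iff]
  intro h
  constructor
  · intro hh
    have h1 : h * c = c * h := hc h hh
    have h2 : c * h * c⁻¹ = h := by rw [← h1, mul_inv_cancel_right]
    rw [h2]; exact hh
  · intro hh
    have key : (c * h * c⁻¹) * c = c * (c * h * c⁻¹) := hc _ hh
    have h2 : h = c * h * c⁻¹ := by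
      apply mul_left_cancel (a := c)
      calc c * h = (c * h * c⁻¹) * c := by group
        _ = c * (c * h * c⁻¹) := key
    rw [h2]; exact hh

/-- conjugation by an element of the normalizer of `N` preserves `relPCore p N`. -/
lemma conj_mem_relPCore (p : ℕ) {N : Subgroup G} {n : G} (hn : n ∈ (Subgroup.normalizer (N : Set G)))
    {x : G} (hx : x ∈ relPCore p N) : n * x * n⁻¹ ∈ relPCore p N := by
  have hmap : Subgroup.map (MulAut.conj n).toMonoidHom (relPCore p N) ≤ relPCore p N := by
    unfold relPCore
    rw [(Subgroup.gc_map_comap _).l_sSup]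
    apply iSup₂_le
    intro q hq
    apply le_sSup
    refine ⟨?_, hq.2.1.map _, ?_⟩
    · rintro y hy
      obtain ⟨z, hz, rfl⟩ := Subgroup.mem_map.mp hy
      show n * z * n⁻¹ ∈ N
      exact (Subgroup.mem_normalizer_iff.mp hn z).mp (hq.1 hz)
    · rintro m hm y hy
      obtain ⟨z, hz, rfl⟩ := Subgroup.mem_map.mp hy
      have hm' : n⁻¹ * m * n ∈ N := (Subgroup.mem_normalizer_iff''.mp hn m).mp hm
      have hz' := hq.2.2 _ hm' z hz
      refine Subgroup.mem_map.mpr ⟨_, hz', ?_⟩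
      show n * ((n⁻¹ * m * n) * z * (n⁻¹ * m * n)⁻¹) * n⁻¹ = m * (n * z * n⁻¹) * m⁻¹
      group
  exact hmap (Subgroup.mem_map.mpr ⟨x, hx, rfl⟩)

end aux

/-- If `P` is an abelian radical `p`-subgroup of a finite group `G`,
then `O_p(Z(C_G(P))) = P`, where `Z(C_G(P)) = C_G(P) ⊓ C_G(C_G(P))`. -/
theorem stmt1 {G : Type*} [Group G] [Finite G] (p : ℕ) (hp : p.Prime)
    (P : Subgroup G) (hP : IsPGroup p P)
    (hab : ∀ x ∈ P, ∀ y ∈ P, x * y = y * x)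
    (hrad : relPCore p (Subgroup.normalizer (P : Set G)) = P) :
    relPCore p (Subgroup.centralizer (P : Set G) ⊓
      Subgroup.centralizer ((Subgroup.centralizer (P : Set G) : Subgroup G) : Set G)) = P := by
  set C : Subgroup G := Subgroup.centralizer (P : Set G) with hCdef
  set Z : Subgroup G := C ⊓ Subgroup.centralizer (C : Set G) with hZdef
  have hPC : P ≤ C := fun x hx => Subgroup.mem_centralizer_iff.mpr fun y hy => hab y hy x hx
  have hPZ : P ≤ Z := by
    intro x hx
    refine Subgroup.mem_inf.mpr ⟨hPC hx, Subgroup.mem_centralizer_iff.mpr fun c hc => ?_⟩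
    exact (Subgroup.mem_centralizer_iff.mp hc x hx).symm
  -- elements of Z commute with each other
  have hZcomm : ∀ x ∈ Z, ∀ y ∈ Z, x * y = y * x := by
    intro x hx y hy
    exact Subgroup.mem_centralizer_iff.mp (Subgroup.mem_inf.mp hy).2 x (Subgroup.mem_inf.mp hx).1
  -- elements of Z centralize P
  have hZcent : ∀ n ∈ Z, ∀ x ∈ P, n * x * n⁻¹ = x := by
    intro n hn x hx
    have h1 : x * n = n * x := Subgroup.mem_centralizer_iff.mp (Subgroup.mem_inf.mp hn).1 x hx
    rw [← h1, mul_inv_cancel_right]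
  -- P ≤ O_p(Z)
  have hPle : P ≤ relPCore p Z :=
    le_sSup ⟨hPZ, hP, fun n hn x hx => by rw [hZcent n hn x hx]; exact hx⟩
  set Q : Subgroup G := relPCore p Z with hQdef
  set T : Set (Subgroup G) :=
    {q : Subgroup G | q ≤ Z ∧ IsPGroup p q ∧ ∀ n ∈ Z, ∀ x ∈ q, n * x * n⁻¹ ∈ q} with hTdef
  have hQT : Q = sSup T := rfl
  have hQZ : Q ≤ Z := sSup_le fun q hq => hq.1
  -- N_G(P) normalizes Z
  have hNZ : ∀ n ∈ (Subgroup.normalizer (P : Set G)), ∀ z ∈ Z, n * z * n⁻¹ ∈ Z := by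
    intro n hn z hz
    obtain ⟨hz1, hz2⟩ := Subgroup.mem_inf.mp hz
    refine Subgroup.mem_inf.mpr ⟨conj_mem_centralizer_of_normalizes hn hz1, ?_⟩
    have hnC : n ∈ (Subgroup.normalizer (C : Set G)) := by
      rw [Subgroup.mem_normalizer_iff]
      intro h
      constructor
      · intro hh; exact conj_mem_centralizer_of_normalizes hn hh
      · intro hh
        have := conj_mem_centralizer_of_normalizes (inv_mem hn) hh
        simpa [mul_assoc] using this
    exact conj_mem_centralizer_of_normalizes hnC hz2
  have hNZ' : ∀ n ∈ (Subgroup.normalizer (P : Set G)), n ∈ (Subgroup.normalizer (Z : Set G)) := by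
    intro n hn
    rw [Subgroup.mem_normalizer_iff]
    intro z
    constructor
    · exact hNZ n hn z
    · intro hz
      have := hNZ n⁻¹ (inv_mem hn) _ hz
      simpa [mul_assoc] using this
  -- Q is a p-group since Z is abelian
  have hQp : IsPGroup p Q := by
    intro g
    have hxQ : (g : G) ∈ Q := g.2
    suffices h : ∃ k : ℕ, (g : G) ^ p ^ k = 1 by
      obtain ⟨k, hk⟩ := h
      exact ⟨k, by ext; push_cast; exact hk⟩
    have hQeq : Q = Subgroup.closure (⋃ s ∈ T, (s : Set G)) := by
      rw [hQT, sSup_eq_iSup', Subgroup.iSup_eq_closure]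
      congr 1
      ext x
      simp
    have key : ∀ y ∈ Subgroup.closure (⋃ s ∈ T, (s : Set G)), ∃ k : ℕ, y ^ p ^ k = 1 := by
      intro y hy
      induction hy using Subgroup.closure_induction with
      | mem z hz =>
        obtain ⟨s, hs, hzs⟩ := by simpa using hz
        obtain ⟨k, hk⟩ := hs.2.1 ⟨z, hzs⟩
        exact ⟨k, by simpa [← Subtype.coe_inj] using hk⟩
      | one => exact ⟨0, one_pow _⟩
      | mul a b ha hb iha ihb =>
        obtain ⟨k, hk⟩ := iha
        obtain ⟨l, hl⟩ := ihb
        have hcomm : Commute a b := hZcomm a (hQZ (hQeq.ge ha)) b (hQZ (hQeq.ge hb))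
        refine ⟨k + l, ?_⟩
        rw [hcomm.mul_pow, pow_add, pow_mul, hk, one_pow, one_mul,
          mul_comm (p ^ k), pow_mul, hl, one_pow]
      | inv a ha iha =>
        obtain ⟨k, hk⟩ := iha
        exact ⟨k, by rw [inv_pow, hk, inv_one]⟩
    exact key _ (by rw [← hQeq]; exact hxQ)
  -- Q ≤ O_p(N_G(P)) = P
  have hQle : Q ≤ relPCore p (Subgroup.normalizer (P : Set G)) := by
    apply le_sSup
    refine ⟨hQZ.trans (le_trans inf_le_left (centralizer_le_normalizer' P)), hQp, ?_⟩
    intro n hn x hx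
    exact conj_mem_relPCore p (hNZ' n hn) hx
  rw [hrad] at hQle
  exact le_antisymm hQle hPle
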